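/- arXiv:0903.0241 — 3 statements merged into one kernel-verified Lean document; each statement's English description precedes it below -/
import Mathlib

section
/- Let R > 1 and let λ > 0 be a real number. Let g be a holomorphic function on the annulus K_R = {z ∈ ℂ : 1/R < |z| < R} with g(z) ≠ 0 for all z ∈ K_R, and assume (1/(2π)) ∫₀^{2π} (1/g(e^{it})) dt = −λ. Then for every ρ with 1/R < ρ < R there exists t₂ ∈ [0, 2π] such that |g(ρ e^{it₂}) + 1/(2λ)| = 1/(2λ); equivalently, writing g(ρ e^{it₂}) = x + iy, one has x² + y² + x/λ = 0. In particular, the image curve γ_ρ = g(C_ρ) of each concentric circle C_ρ = {z : |z| = ρ} meets the circle L₂ = {z ∈ ℂ : |z + 1/(2λ)| = 1/(2λ)}. -/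
/-- The annulus `K_R = {z : 1/R < |z| < R}`. -/
def annulus (R : ℝ) : Set ℂ := {z : ℂ | 1 / R < ‖z‖ ∧ ‖z‖ < R}

open Complex Set Metric


lemma circ_aux (r : ℝ) (hr : r ≠ 0) (f : ℂ → ℂ) :
    (∮ z in C((0:ℂ), r), z⁻¹ • f z)
      = Complex.I * ∫ t in (0:ℝ)..(2*Real.pi), f (r * Complex.exp (t * Complex.I)) := by
  rw [circleIntegral, ← intervalIntegral.integral_const_mul]
  refine intervalIntegral.integral_congr fun t _ => ?_
  have h := circleMap_ne_center (c := (0:ℂ)) (R := r) hr (θ := t)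
  simp only [deriv_circleMap, smul_eq_mul, circleMap, ofReal_zero, zero_add] at h ⊢
  field_simp
  exact mul_div_cancel_left₀ _ (show (r:ℂ) ≠ 0 by exact_mod_cast hr)

lemma isOpen_annulus (R : ℝ) : IsOpen (annulus R) := by
  have : annulus R = (fun z : ℂ => ‖z‖) ⁻¹' Set.Ioo (1/R) R := rfl
  rw [this]
  exact isOpen_Ioo.preimage continuous_norm

lemma invariance (R : ℝ) (hR : 1 < R) (f : ℂ → ℂ)
    (hf : DifferentiableOn ℂ f (annulus R))
    (ρ : ℝ) (hρ₁ : 1 / R < ρ) (hρ₂ : ρ < R) :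
    (∫ t in (0:ℝ)..(2*Real.pi), f (ρ * Complex.exp (t * Complex.I)))
      = ∫ t in (0:ℝ)..(2*Real.pi), f (Complex.exp (t * Complex.I)) := by
  have hRpos : (0:ℝ) < R := lt_trans one_pos hR
  have hiR : 1 / R < 1 := by rw [div_lt_one hRpos]; exact hR
  have hρpos : 0 < ρ := lt_trans (by positivity) hρ₁
  set a := min ρ 1 with ha
  set b := max ρ 1 with hb
  have hapos : 0 < a := lt_min hρpos one_pos
  have hab : a ≤ b := min_le_max
  have hsub : closedBall (0:ℂ) b \ ball (0:ℂ) a ⊆ annulus R := by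
    rintro z ⟨hz1, hz2⟩
    rw [mem_closedBall_zero_iff] at hz1
    rw [mem_ball_zero_iff, not_lt] at hz2
    constructor
    · exact lt_of_lt_of_le (lt_min hρ₁ hiR) hz2
    · exact lt_of_le_of_lt hz1 (max_lt hρ₂ hR)
  have hdiff : ∀ z ∈ annulus R, DifferentiableAt ℂ f z := fun z hz =>
    hf.differentiableAt ((isOpen_annulus R).mem_nhds hz)
  have key : (∮ z in C((0:ℂ), b), z⁻¹ • f z) = ∮ z in C((0:ℂ), a), z⁻¹ • f z := by
    have h := circleIntegral_sub_center_inv_smul_eq_of_differentiable_on_annulus_off_countable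
      (c := (0:ℂ)) (f := f) hapos hab Set.countable_empty ?_ ?_
    · simpa using h
    · exact fun z hz => (hdiff z (hsub hz)).continuousAt.continuousWithinAt
    · rintro z ⟨hz, -⟩
      exact hdiff z (hsub ⟨ball_subset_closedBall hz.1, fun h => hz.2 (ball_subset_closedBall h)⟩)
  rw [circ_aux a hapos.ne' f, circ_aux b (hapos.trans_le hab).ne' f] at key
  have key2 := mul_left_cancel₀ Complex.I_ne_zero key
  rcases le_total ρ 1 with h | h
  · rw [ha, hb, min_eq_left h, max_eq_right h] at key2
    rw [← key2]; simp
  · rw [ha, hb, min_eq_right h, max_eq_left h] at key2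
    rw [key2]; simp

/-- Second half of relation (3) of the paper together with its geometric
interpretation (⋆): if `g` is holomorphic and zero-free on `K_R` with `a₀[1/g] = -λ`
(`λ > 0`), then the image of every concentric circle of radius `ρ ∈ (1/R, R)` meets the
circle `L₂ = {z : |z + 1/(2λ)| = 1/(2λ)}`; writing the point as `x + iy`, it satisfies
`x² + y² + x/λ = 0`. -/
theorem image_circle_meets_L2
    (R : ℝ) (hR : 1 < R) (l : ℝ) (hl : 0 < l) (g : ℂ → ℂ)
    (hg : DifferentiableOn ℂ g (annulus R))
    (hne : ∀ z ∈ annulus R, g z ≠ 0)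
    (ha0 : (1 / (2 * (Real.pi : ℂ))) *
        ∫ t in (0:ℝ)..(2 * Real.pi), (g (Complex.exp (t * Complex.I)))⁻¹ = (-l : ℂ))
    (ρ : ℝ) (hρ₁ : 1 / R < ρ) (hρ₂ : ρ < R) :
    ∃ t₂ ∈ Set.Icc (0:ℝ) (2 * Real.pi),
      ‖g (ρ * Complex.exp (t₂ * Complex.I)) + 1 / (2 * l)‖ = 1 / (2 * l) ∧
      (g (ρ * Complex.exp (t₂ * Complex.I))).re ^ 2 +
        (g (ρ * Complex.exp (t₂ * Complex.I))).im ^ 2 +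
        (g (ρ * Complex.exp (t₂ * Complex.I))).re / l = 0 := by
  have hπ : (0:ℝ) < Real.pi := Real.pi_pos
  have hRpos : (0:ℝ) < R := lt_trans one_pos hR
  have hρpos : 0 < ρ := lt_trans (by positivity) hρ₁
  set f : ℂ → ℂ := fun z => (g z)⁻¹ with hf_def
  have hf : DifferentiableOn ℂ f (annulus R) := hg.inv hne
  -- membership of the circle of radius ρ in the annulus
  have hmem : ∀ t : ℝ, (ρ : ℂ) * Complex.exp (t * Complex.I) ∈ annulus R := by
    intro t
    have habs : ‖(ρ:ℂ) * Complex.exp (t * Complex.I)‖ = ρ := by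
      rw [norm_mul, Complex.norm_exp_ofReal_mul_I, mul_one, Complex.norm_of_nonneg hρpos.le]
    exact ⟨by rw [habs]; exact hρ₁, by rw [habs]; exact hρ₂⟩
  -- value of the integral over radius ρ
  have h2π : (2 * (Real.pi:ℂ)) ≠ 0 := by
    simp [Real.pi_ne_zero]
  have hIe : (∫ t in (0:ℝ)..(2*Real.pi), f (Complex.exp (t * Complex.I)))
      = -l * (2 * Real.pi) := by
    have := ha0
    field_simp at this
    simp only [one_div] at this
    rw [hf_def]
    linear_combination this
  have hIρ : (∫ t in (0:ℝ)..(2*Real.pi), f (ρ * Complex.exp (t * Complex.I)))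
      = -l * (2 * Real.pi) := by
    rw [invariance R hR f hf ρ hρ₁ hρ₂, hIe]
  -- the real function u
  set u : ℝ → ℝ := fun t => (f ((ρ:ℂ) * Complex.exp (t * Complex.I))).re with hu_def
  have hcont : Continuous fun t : ℝ => f ((ρ:ℂ) * Complex.exp (t * Complex.I)) := by
    have hc : Continuous fun t : ℝ => (ρ:ℂ) * Complex.exp (t * Complex.I) := by
      continuity
    refine continuous_iff_continuousAt.2 fun t => ?_
    have hz := hmem t
    have hgc : ContinuousAt g ((ρ:ℂ) * Complex.exp (t * Complex.I)) :=
      (hg.differentiableAt ((isOpen_annulus R).mem_nhds hz)).continuousAt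
    have hcomp : ContinuousAt (fun t : ℝ => g ((ρ:ℂ) * Complex.exp (t * Complex.I))) t :=
      ContinuousAt.comp (g := g) (f := fun t : ℝ => (ρ:ℂ) * Complex.exp (t * Complex.I))
        hgc hc.continuousAt
    exact hcomp.inv₀ (hne _ hz)
  have hucont : Continuous u := Complex.continuous_re.comp hcont
  have hInt : IntervalIntegrable (fun t => f ((ρ:ℂ) * Complex.exp (t * Complex.I)))
      MeasureTheory.volume 0 (2 * Real.pi) := hcont.intervalIntegrable _ _
  have huI : (∫ t in (0:ℝ)..(2*Real.pi), u t) = -l * (2 * Real.pi) := by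
    have : (∫ t in (0:ℝ)..(2*Real.pi), u t)
        = (∫ t in (0:ℝ)..(2*Real.pi), f ((ρ:ℂ) * Complex.exp (t * Complex.I))).re := by
      rw [hu_def]
      rw [intervalIntegral.integral_of_le (by positivity), intervalIntegral.integral_of_le (by positivity)]
      have h := integral_re (𝕜 := ℂ) hInt.1
      simpa using h
    rw [this, hIρ]
    simp
  have huint : IntervalIntegrable u MeasureTheory.volume 0 (2 * Real.pi) :=
    hucont.intervalIntegrable _ _
  -- existence of points below and above -l
  have hex_le : ∃ t ∈ Set.Icc (0:ℝ) (2*Real.pi), u t ≤ -l := by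
    by_contra hcon
    push_neg at hcon
    have hpos : 0 < ∫ t in (0:ℝ)..(2*Real.pi), (u t + l) := by
      refine intervalIntegral.intervalIntegral_pos_of_pos_on
        (huint.add (_root_.intervalIntegrable_const)) (fun x hx => ?_) (by positivity)
      have := hcon x ⟨hx.1.le, hx.2.le⟩
      linarith
    rw [intervalIntegral.integral_add huint _root_.intervalIntegrable_const, huI,
      intervalIntegral.integral_const] at hpos
    simp only [smul_eq_mul, sub_zero] at hpos
    nlinarith
  have hex_ge : ∃ t ∈ Set.Icc (0:ℝ) (2*Real.pi), -l ≤ u t := by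
    by_contra hcon
    push_neg at hcon
    have hpos : 0 < ∫ t in (0:ℝ)..(2*Real.pi), (-l - u t) := by
      refine intervalIntegral.intervalIntegral_pos_of_pos_on
        ((_root_.intervalIntegrable_const (c := -l)).sub huint) (fun x hx => ?_) (by positivity)
      have := hcon x ⟨hx.1.le, hx.2.le⟩
      linarith
    rw [intervalIntegral.integral_sub _root_.intervalIntegrable_const huint, huI,
      intervalIntegral.integral_const] at hpos
    simp only [smul_eq_mul, sub_zero] at hpos
    nlinarith
  obtain ⟨s₁, hs₁, hle⟩ := hex_le
  obtain ⟨s₂, hs₂, hge⟩ := hex_ge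
  -- intermediate value
  have hiv : (-l) ∈ u '' Set.uIcc s₁ s₂ := by
    apply intermediate_value_uIcc hucont.continuousOn
    exact Set.mem_uIcc.2 (Or.inl ⟨hle, hge⟩)
  obtain ⟨t₂, ht₂mem, ht₂⟩ := hiv
  have ht₂Icc : t₂ ∈ Set.Icc (0:ℝ) (2*Real.pi) := Set.uIcc_subset_Icc hs₁ hs₂ ht₂mem
  refine ⟨t₂, ht₂Icc, ?_⟩
  set w := g ((ρ:ℂ) * Complex.exp (t₂ * Complex.I)) with hw_def
  have hw0 : w ≠ 0 := hne _ (hmem t₂)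
  have hre : (w⁻¹).re = -l := ht₂
  rw [Complex.inv_re] at hre
  have hnsq : Complex.normSq w = w.re ^ 2 + w.im ^ 2 := by
    rw [Complex.normSq_apply]; ring
  have hnpos : 0 < Complex.normSq w := Complex.normSq_pos.2 hw0
  have hx : w.re = -l * (w.re ^ 2 + w.im ^ 2) := by
    rw [← hnsq]
    field_simp at hre
    linarith [hre]
  have hl' : l ≠ 0 := hl.ne'
  have hquad : w.re ^ 2 + w.im ^ 2 + w.re / l = 0 := by
    have h1 : w.re / l = -(w.re ^ 2 + w.im ^ 2) := by
      rw [div_eq_iff hl']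
      linear_combination hx
    rw [h1]
    ring
  constructor
  · have hcast : (1 / (2 * (l:ℂ))) = ((1 / (2 * l) : ℝ) : ℂ) := by push_cast; ring
    rw [hcast]
    have habs2 : (‖w + ((1 / (2 * l) : ℝ) : ℂ)‖) ^ 2 = (1 / (2 * l)) ^ 2 := by
      rw [Complex.sq_norm, Complex.normSq_apply]
      simp only [Complex.add_re, Complex.add_im, Complex.ofReal_re, Complex.ofReal_im, add_zero]
      linear_combination hquad
    have h1 : (0:ℝ) ≤ ‖w + ((1 / (2 * l) : ℝ) : ℂ)‖ := norm_nonneg _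
    have h2 : (0:ℝ) ≤ 1 / (2 * l) := by positivity
    rw [← Real.sqrt_sq h1, habs2, Real.sqrt_sq h2]
  · exact hquad
end

section
/- Let λ > 0 and set λ* = √(λ² + 1) − λ, so that 0 < λ* < 1. Let D = {z ∈ ℂ : Re z < λ and |z + 1/(2λ)| > 1/(2λ)} and define the Möbius transformation f(z) = (1/λ*) · (z + λ*)/(1 − λ* z). Then f maps D bijectively onto the annulus K₁ = {w ∈ ℂ : 1 < |w| < 1/λ*²}; in particular f is holomorphic and injective on D (its pole 1/λ* = λ + √(1 + λ²) lies outside the closure of D) and f(D) = K₁. -/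
open Complex

lemma moebius_aux_iffs (l s : ℝ) (hl : 0 < l) (hs0 : 0 < s)
    (hkey : s ^ 2 + 2 * l * s = 1) (z : ℂ) (hden : (1 : ℂ) - (s : ℂ) * z ≠ 0) :
    (1 < ‖(1/(s:ℂ)) * ((z + (s:ℂ))/(1 - (s:ℂ)*z))‖ ↔
      0 < l * Complex.normSq z + z.re) ∧
    (‖(1/(s:ℂ)) * ((z + (s:ℂ))/(1 - (s:ℂ)*z))‖ < 1/s^2 ↔ z.re < l) := by
  have hB : 0 < ‖1 - (s:ℂ)*z‖ := norm_pos_iff.mpr hden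
  have hA : 0 ≤ ‖z + (s:ℂ)‖ := norm_nonneg _
  have hc : (0:ℝ) < 2*s*(1+s^2) := by positivity
  have habs : ‖(1/(s:ℂ)) * ((z + (s:ℂ))/(1 - (s:ℂ)*z))‖
      = ‖z + (s:ℂ)‖ / (s * ‖1 - (s:ℂ)*z‖) := by
    rw [norm_mul, norm_div, norm_div, norm_one, Complex.norm_real, Real.norm_of_nonneg hs0.le]
    ring
  have hnsA : Complex.normSq (z + (s:ℂ)) = (z.re + s)^2 + z.im^2 := by
    simp [Complex.normSq_apply]; ring
  have hnsB : Complex.normSq (1 - (s:ℂ)*z) = (1 - s*z.re)^2 + (s*z.im)^2 := by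
    simp [Complex.normSq_apply]; ring
  have hE1 : ((z.re+s)^2+z.im^2) - s^2*((1-s*z.re)^2+(s*z.im)^2)
      = 2*s*(1+s^2)*(l*(z.re^2+z.im^2)+z.re) := by
    linear_combination (-(1+s^2)*(z.re^2+z.im^2)) * hkey
  have hE2 : ((1-s*z.re)^2+(s*z.im)^2) - s^2*((z.re+s)^2+z.im^2)
      = 2*s*(1+s^2)*(l - z.re) := by
    linear_combination (-(1+s^2)) * hkey
  constructor
  · rw [habs, lt_div_iff₀ (by positivity), one_mul]
    rw [show s * ‖1 - (s:ℂ)*z‖ < ‖z + (s:ℂ)‖ ↔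
        (s * ‖1 - (s:ℂ)*z‖)^2 < (‖z + (s:ℂ)‖)^2 from
      (pow_lt_pow_iff_left₀ (by positivity) hA two_ne_zero).symm]
    rw [mul_pow, Complex.sq_norm, Complex.sq_norm, hnsA, hnsB, Complex.normSq_apply]
    constructor
    · intro h
      have hX : 0 < 2*s*(1+s^2)*(l*(z.re^2+z.im^2)+z.re) := by linarith
      nlinarith [hX, hc]
    · intro h
      have hX : 0 < 2*s*(1+s^2)*(l*(z.re^2+z.im^2)+z.re) := by
        apply mul_pos hc; nlinarith [h]
      linarith
  · rw [habs, div_lt_iff₀ (by positivity)]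
    rw [show (1/s^2) * (s * ‖1 - (s:ℂ)*z‖) = ‖1 - (s:ℂ)*z‖ / s by
      field_simp]
    rw [lt_div_iff₀ hs0]
    rw [show ‖z + (s:ℂ)‖ * s < ‖1 - (s:ℂ)*z‖ ↔
        (‖z + (s:ℂ)‖ * s)^2 < (‖1 - (s:ℂ)*z‖)^2 from
      (pow_lt_pow_iff_left₀ (by positivity) hB.le two_ne_zero).symm]
    rw [mul_pow, Complex.sq_norm, Complex.sq_norm, hnsA, hnsB]
    constructor
    · intro h
      have hX : 0 < 2*s*(1+s^2)*(l - z.re) := by linarith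
      nlinarith [hX, hc]
    · intro h
      have hX : 0 < 2*s*(1+s^2)*(l - z.re) := mul_pos hc (by linarith)
      linarith



/-- The Möbius transformation `f(z) = (1/λ*) (z + λ*)/(1 - λ* z)` maps the doubly
connected domain `D = {z : Re z < λ, |z + 1/(2λ)| > 1/(2λ)}` bijectively onto the
annulus `K₁ = {w : 1 < |w| < 1/λ*²}`, where `λ* = √(λ² + 1) - λ ∈ (0, 1)`;
in particular `f` is holomorphic and injective on `D`. -/
theorem moebius_maps_D_onto_annulus (l : ℝ) (hl : 0 < l) :
    0 < Real.sqrt (l ^ 2 + 1) - l ∧ Real.sqrt (l ^ 2 + 1) - l < 1 ∧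
    (DifferentiableOn ℂ
      (fun z : ℂ =>
        (1 / ((Real.sqrt (l ^ 2 + 1) - l : ℝ) : ℂ)) *
          ((z + ((Real.sqrt (l ^ 2 + 1) - l : ℝ) : ℂ)) /
            (1 - ((Real.sqrt (l ^ 2 + 1) - l : ℝ) : ℂ) * z)))
      {z : ℂ | z.re < l ∧ 1 / (2 * l) < ‖z + 1 / (2 * l)‖}) ∧
    Set.BijOn
      (fun z : ℂ =>
        (1 / ((Real.sqrt (l ^ 2 + 1) - l : ℝ) : ℂ)) *
          ((z + ((Real.sqrt (l ^ 2 + 1) - l : ℝ) : ℂ)) /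
            (1 - ((Real.sqrt (l ^ 2 + 1) - l : ℝ) : ℂ) * z)))
      {z : ℂ | z.re < l ∧ 1 / (2 * l) < ‖z + 1 / (2 * l)‖}
      {w : ℂ | 1 < ‖w‖ ∧
        ‖w‖ < 1 / (Real.sqrt (l ^ 2 + 1) - l) ^ 2} := by
  set s : ℝ := Real.sqrt (l ^ 2 + 1) - l with hsdef
  have hsq : Real.sqrt (l ^ 2 + 1) ^ 2 = l ^ 2 + 1 := Real.sq_sqrt (by positivity)
  have hsnn := Real.sqrt_nonneg (l ^ 2 + 1)
  have hs0 : 0 < s := by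
    have h : l < Real.sqrt (l ^ 2 + 1) := by nlinarith
    rw [hsdef]; linarith
  have hs1 : s < 1 := by
    have h : Real.sqrt (l ^ 2 + 1) < l + 1 := by nlinarith
    rw [hsdef]; linarith
  have hkey : s ^ 2 + 2 * l * s = 1 := by rw [hsdef]; linear_combination hsq
  have hsC : (s : ℂ) ≠ 0 := by exact_mod_cast hs0.ne'
  have h1s : (1 : ℂ) + (s : ℂ) ^ 2 ≠ 0 := by
    have he : (1 : ℂ) + (s : ℂ) ^ 2 = ((1 + s ^ 2 : ℝ) : ℂ) := by push_cast; ring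
    rw [he]
    exact Complex.ofReal_ne_zero.mpr (by positivity)
  -- denominator never vanishes on D
  have hden : ∀ z : ℂ, z.re < l → (1 : ℂ) - (s : ℂ) * z ≠ 0 := by
    intro z hz h
    have h2 : ((1 : ℂ) - (s : ℂ) * z).re = 0 := by rw [h]; simp
    simp [Complex.sub_re, Complex.mul_re, Complex.ofReal_re, Complex.ofReal_im] at h2
    nlinarith [mul_lt_mul_of_pos_left hz hs0]
  -- the circle condition
  have hcirc : ∀ z : ℂ, (1 / (2 * l) < ‖z + 1 / (2 * (l : ℂ))‖ ↔
      0 < l * Complex.normSq z + z.re) := by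
    intro z
    have hcast : (1 / (2 * (l : ℂ))) = ((1 / (2 * l) : ℝ) : ℂ) := by push_cast; ring
    have ha : 2 * l * (1 / (2 * l)) = 1 := by field_simp
    set a : ℝ := 1 / (2 * l) with hadef
    have ha0 : 0 ≤ a := by positivity
    rw [hcast]
    rw [show a < ‖z + (a : ℂ)‖ ↔ a ^ 2 < (‖z + (a : ℂ)‖) ^ 2 from
      (pow_lt_pow_iff_left₀ ha0 (norm_nonneg _) two_ne_zero).symm]
    rw [Complex.sq_norm]
    have hns : Complex.normSq (z + (a : ℂ)) = (z.re + a) ^ 2 + z.im ^ 2 := by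
      simp [Complex.normSq_apply]; ring
    rw [hns, Complex.normSq_apply]
    have hE : ((z.re + a) ^ 2 + z.im ^ 2 - a ^ 2) * l = l * (z.re ^ 2 + z.im ^ 2) + z.re := by
      linear_combination z.re * ha
    constructor
    · intro h
      nlinarith [mul_pos (show (0:ℝ) < (z.re + a) ^ 2 + z.im ^ 2 - a ^ 2 by linarith) hl]
    · intro h
      nlinarith [hE, hl]
  refine ⟨hs0, hs1, ?_, ?_, ?_, ?_⟩
  · -- differentiability
    intro z hz
    have h1 := hden z hz.1
    exact DifferentiableAt.differentiableWithinAt (by fun_prop (disch := exact h1))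
  · -- maps to
    intro z hz
    obtain ⟨hz1, hz2⟩ := hz
    obtain ⟨i1, i2⟩ := moebius_aux_iffs l s hl hs0 hkey z (hden z hz1)
    exact ⟨i1.mpr ((hcirc z).mp hz2), i2.mpr hz1⟩
  · -- injective
    intro z1 h1 z2 h2 heq
    have d1 := hden z1 h1.1
    have d2 := hden z2 h2.1
    simp only at heq
    field_simp at heq
    have h3 : (s : ℂ) * (((1 : ℂ) + (s : ℂ) ^ 2) * z1 - ((1 : ℂ) + (s : ℂ) ^ 2) * z2) = 0 := by
      linear_combination (s : ℂ) * heq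
    rcases mul_eq_zero.mp h3 with h4 | h4
    · exact absurd h4 hsC
    · exact mul_left_cancel₀ h1s (sub_eq_zero.mp h4)
  · -- surjective
    intro w hw
    obtain ⟨hw1, hw2⟩ := hw
    have hd2 : (1 : ℂ) + (s : ℂ) ^ 2 * w ≠ 0 := by
      intro h
      have h4 : ‖(s : ℂ) ^ 2 * w‖ = 1 := by
        rw [show (s : ℂ) ^ 2 * w = -1 by linear_combination h]
        simp
      rw [norm_mul, norm_pow, Complex.norm_real, Real.norm_of_nonneg hs0.le] at h4
      have h5 : s ^ 2 * ‖w‖ < s ^ 2 * (1 / s ^ 2) :=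
        mul_lt_mul_of_pos_left hw2 (by positivity)
      have h6 : s ^ 2 * (1 / s ^ 2) = 1 := by field_simp
      rw [h6] at h5
      linarith
    set zz : ℂ := (s : ℂ) * (w - 1) / (1 + (s : ℂ) ^ 2 * w) with hzzdef
    have hdz : (1 : ℂ) - (s : ℂ) * zz = (1 + (s : ℂ) ^ 2) / (1 + (s : ℂ) ^ 2 * w) := by
      rw [hzzdef]
      field_simp
      ring
    have hdz0 : (1 : ℂ) - (s : ℂ) * zz ≠ 0 := by
      rw [hdz]; exact div_ne_zero h1s hd2
    have hfz : (1 / (s : ℂ)) * ((zz + (s : ℂ)) / (1 - (s : ℂ) * zz)) = w := by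
      rw [hdz, hzzdef]
      field_simp
      ring
    obtain ⟨i1, i2⟩ := moebius_aux_iffs l s hl hs0 hkey zz hdz0
    refine ⟨zz, ⟨?_, ?_⟩, hfz⟩
    · exact i2.mp (by rw [hfz]; exact hw2)
    · exact (hcirc zz).mpr (i1.mp (by rw [hfz]; exact hw1))
end

section
/- Let λ > 0 and set λ* = √(λ² + 1) − λ. Define f(z) = (1/λ*) · (z + λ*)/(1 − λ* z). Then: (a) for every z ∈ ℂ with Re z = λ one has |f(z)| = 1/λ*²; and (b) for every z ∈ ℂ with |z + 1/(2λ)| = 1/(2λ) one has |f(z)| = 1. (The pole 1/λ* = λ + √(1 + λ²) of f lies on neither of these two boundary curves, so f is defined there.) -/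
/-- Boundary behaviour of the Möbius map `f(z) = (1/λ*) (z + λ*)/(1 - λ* z)` with
`λ* = √(λ² + 1) - λ`: it sends the vertical line `{Re z = λ}` to the circle
`{|w| = 1/λ*²}` and the circle `{|z + 1/(2λ)| = 1/(2λ)}` to the unit circle. -/
theorem moebius_boundary_behaviour (l : ℝ) (hl : 0 < l) :
    (∀ z : ℂ, z.re = l →
      ‖((1 / ((Real.sqrt (l ^ 2 + 1) - l : ℝ) : ℂ)) *
          ((z + ((Real.sqrt (l ^ 2 + 1) - l : ℝ) : ℂ)) /
            (1 - ((Real.sqrt (l ^ 2 + 1) - l : ℝ) : ℂ) * z)))‖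
        = 1 / (Real.sqrt (l ^ 2 + 1) - l) ^ 2) ∧
    (∀ z : ℂ, ‖z + 1 / (2 * l)‖ = 1 / (2 * l) →
      ‖((1 / ((Real.sqrt (l ^ 2 + 1) - l : ℝ) : ℂ)) *
          ((z + ((Real.sqrt (l ^ 2 + 1) - l : ℝ) : ℂ)) /
            (1 - ((Real.sqrt (l ^ 2 + 1) - l : ℝ) : ℂ) * z)))‖
        = 1) := by
  set s : ℝ := Real.sqrt (l ^ 2 + 1) - l with hs_def
  have hsq : Real.sqrt (l ^ 2 + 1) ^ 2 = l ^ 2 + 1 := Real.sq_sqrt (by positivity)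
  have hs : 0 < s := by
    have h1 : l < Real.sqrt (l ^ 2 + 1) := by
      nlinarith [Real.sqrt_nonneg (l ^ 2 + 1)]
    simp only [hs_def]; linarith
  have key : s ^ 2 + 2 * l * s = 1 := by
    simp only [hs_def]; nlinarith [hsq]
  constructor
  · intro z hz
    have hden : (1 : ℂ) - (s : ℂ) * z ≠ 0 := by
      intro h
      have h1 : ((1 : ℂ) - (s : ℂ) * z).re = 0 := by rw [h]; simp
      simp [Complex.sub_re, Complex.mul_re, hz] at h1
      nlinarith [sq_nonneg s]
    have hb : ‖(1 : ℂ) - (s : ℂ) * z‖ ≠ 0 := norm_ne_zero_iff.mpr hden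
    have hB := norm_nonneg ((1 : ℂ) - (s : ℂ) * z)
    have hA := norm_nonneg (z + (s : ℂ))
    have e1 : ‖z + (s : ℂ)‖ ^ 2 = (l + s) ^ 2 + z.im ^ 2 := by
      rw [Complex.sq_norm, Complex.normSq_apply]
      simp [hz]; ring
    have e2 : ‖(1 : ℂ) - (s : ℂ) * z‖ ^ 2
        = (1 - s * l) ^ 2 + (s * z.im) ^ 2 := by
      rw [Complex.sq_norm, Complex.normSq_apply]
      simp [Complex.sub_re, Complex.sub_im, Complex.mul_re, Complex.mul_im, hz]
      ring
    have hsq2 : (s * ‖z + (s : ℂ)‖) ^ 2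
        = ‖(1 : ℂ) - (s : ℂ) * z‖ ^ 2 := by
      rw [mul_pow, e1, e2]
      linear_combination (s ^ 2 + 1) * key
    have hsab : s * ‖z + (s : ℂ)‖ = ‖(1 : ℂ) - (s : ℂ) * z‖ := by
      calc s * ‖z + (s : ℂ)‖
          = Real.sqrt ((s * ‖z + (s : ℂ)‖) ^ 2) :=
            (Real.sqrt_sq (mul_nonneg hs.le hA)).symm
        _ = Real.sqrt (‖(1 : ℂ) - (s : ℂ) * z‖ ^ 2) := by rw [hsq2]
        _ = ‖(1 : ℂ) - (s : ℂ) * z‖ := Real.sqrt_sq hB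
    have hA0 : ‖z + (s : ℂ)‖ ≠ 0 := by
      intro h
      rw [h, mul_zero] at hsab
      exact hb hsab.symm
    rw [norm_mul, norm_div, norm_div, norm_one, Complex.norm_real, Real.norm_eq_abs, abs_of_pos hs,
      ← hsab]
    field_simp
  · intro z hcz
    have hcirc : (z.re + 1 / (2 * l)) ^ 2 + z.im ^ 2 = (1 / (2 * l)) ^ 2 := by
      have h0 := congrArg (· ^ 2) hcz
      rw [Complex.sq_norm, Complex.normSq_apply] at h0
      have hre : (z + 1 / (2 * (l : ℂ))).re = z.re + 1 / (2 * l) := by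
        rw [show (1 : ℂ) / (2 * (l : ℂ)) = ((1 / (2 * l) : ℝ) : ℂ) by push_cast; ring]
        simp
      have him : (z + 1 / (2 * (l : ℂ))).im = z.im := by
        rw [show (1 : ℂ) / (2 * (l : ℂ)) = ((1 / (2 * l) : ℝ) : ℂ) by push_cast; ring]
        simp
      rw [hre, him] at h0
      nlinarith [h0]
    have hxy : l * (z.re ^ 2 + z.im ^ 2) = -z.re := by
      have hl' : (2 * l) ≠ 0 := by positivity
      field_simp at hcirc
      nlinarith [hcirc, hl]
    have hden : (1 : ℂ) - (s : ℂ) * z ≠ 0 := by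
      intro h
      have h1 : ((1 : ℂ) - (s : ℂ) * z).re = 0 := by rw [h]; simp
      have h2 : ((1 : ℂ) - (s : ℂ) * z).im = 0 := by rw [h]; simp
      simp [Complex.sub_re, Complex.sub_im, Complex.mul_re, Complex.mul_im] at h1 h2
      have him : z.im = 0 := h2.resolve_left hs.ne'
      have hre_pos : 0 < z.re := by nlinarith [hs]
      rw [him] at hxy
      nlinarith [mul_pos hl (mul_pos hre_pos hre_pos)]
    have hb : ‖(1 : ℂ) - (s : ℂ) * z‖ ≠ 0 := norm_ne_zero_iff.mpr hden
    have hB := norm_nonneg ((1 : ℂ) - (s : ℂ) * z)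
    have hA := norm_nonneg (z + (s : ℂ))
    have e1 : ‖z + (s : ℂ)‖ ^ 2
        = z.re ^ 2 + z.im ^ 2 + 2 * s * z.re + s ^ 2 := by
      rw [Complex.sq_norm, Complex.normSq_apply]
      simp; ring
    have e2 : ‖(1 : ℂ) - (s : ℂ) * z‖ ^ 2
        = (1 - s * z.re) ^ 2 + (s * z.im) ^ 2 := by
      rw [Complex.sq_norm, Complex.normSq_apply]
      simp [Complex.sub_re, Complex.sub_im, Complex.mul_re, Complex.mul_im]
      ring
    have hsq2 : ‖z + (s : ℂ)‖ ^ 2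
        = (s * ‖(1 : ℂ) - (s : ℂ) * z‖) ^ 2 := by
      have h5 : l * (z.re ^ 2 + z.im ^ 2 + 2 * s * z.re + s ^ 2)
          = l * (s ^ 2 * ((1 - s * z.re) ^ 2 + (s * z.im) ^ 2)) := by
        linear_combination (1 - s ^ 4) * hxy + ((1 + s ^ 2) * z.re) * key
      have h6 := mul_left_cancel₀ hl.ne' h5
      rw [e1, mul_pow, e2]
      linarith [h6]
    have hsab : ‖z + (s : ℂ)‖ = s * ‖(1 : ℂ) - (s : ℂ) * z‖ := by
      calc ‖z + (s : ℂ)‖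
          = Real.sqrt (‖z + (s : ℂ)‖ ^ 2) := (Real.sqrt_sq hA).symm
        _ = Real.sqrt ((s * ‖(1 : ℂ) - (s : ℂ) * z‖) ^ 2) := by rw [hsq2]
        _ = s * ‖(1 : ℂ) - (s : ℂ) * z‖ :=
            Real.sqrt_sq (mul_nonneg hs.le hB)
    rw [norm_mul, norm_div, norm_div, norm_one, Complex.norm_real, Real.norm_eq_abs, abs_of_pos hs,
      hsab]
    field_simp
end
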